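/- Let G = R ⋊_α C with ν(G) = 0 (C = ⟨a⟩ infinite). If (g, g') is a generating pair of G, then D_a(g,g') is a unit of R, where D_a(r·c, r'·c') = r·d_a(c') - r'·d_a(c) for the derivation d_a: C → R with d_a(a) = 1. -/

import Mathlib

/-- The action of a group `C` on `M` by additive automorphisms, packaged as a
homomorphism `C →* MulAut (Multiplicative M)`. -/
def sdAction (C M : Type*) [Group C] [AddCommGroup M] [DistribMulAction C M] :
    C →* MulAut (Multiplicative M) where
  toFun c := AddEquiv.toMultiplicative (DistribMulAction.toAddAut C M c)
  map_one' := by ext x; simp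
  map_mul' c c' := by ext x; simp [mul_smul]

/-- `∂_α(k)`: the Fox derivative `∂_α(k) = 1 + α + ⋯ + α^(k-1)` for `k ≥ 0`,
and `∂_α(k) = -α⁻¹·∂_{α⁻¹}(-k)` for `k < 0`. -/
def delta {R : Type*} [CommRing R] (α : Rˣ) : ℤ → R
  | (k : ℕ) => ∑ i ∈ Finset.range k, (α : R) ^ i
  | (Int.negSucc k) => -((α⁻¹ : Rˣ) : R) * ∑ i ∈ Finset.range (k + 1), ((α⁻¹ : Rˣ) : R) ^ i

section DeltaLemmas

variable {R : Type*} [CommRing R] (α : Rˣ)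

lemma delta_zero : delta α 0 = 0 := by
  show delta α ((0:ℕ):ℤ) = 0; simp [delta]

lemma delta_one : delta α 1 = 1 := by
  show delta α ((1:ℕ):ℤ) = 1; simp [delta]

lemma delta_succ (n : ℤ) : delta α (n + 1) = delta α n + ((α ^ n : Rˣ) : R) := by
  rcases n with k | k
  · show delta α (((k+1:ℕ)):ℤ) = delta α ((k:ℕ):ℤ) + _
    simp [delta, Finset.sum_range_succ, zpow_natCast]
  · rcases k with _ | j
    · show delta α 0 = delta α (Int.negSucc 0) + _
      simp [delta, zpow_negSucc]
    · show delta α (Int.negSucc j) = delta α (Int.negSucc (j+1)) + _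
      have h : ((α ^ (Int.negSucc (j+1)) : Rˣ) : R) = ((α⁻¹:Rˣ):R) ^ (j+2) := by
        rw [zpow_negSucc, ← inv_pow, Units.val_pow_eq_pow_val]
      rw [h]
      simp only [delta, Finset.sum_range_succ]
      ring

lemma delta_pred (n : ℤ) : delta α (n - 1) = delta α n - ((α ^ (n-1) : Rˣ) : R) := by
  have h := delta_succ α (n - 1)
  rw [sub_add_cancel] at h
  linear_combination -h

lemma val_zpow_add (m n : ℤ) :
    ((α ^ (m + n) : Rˣ) : R) = ((α ^ m : Rˣ) : R) * ((α ^ n : Rˣ) : R) := by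
  rw [zpow_add, Units.val_mul]

lemma geom_delta (n : ℤ) : ((α : R) - 1) * delta α n = ((α ^ n : Rˣ) : R) - 1 := by
  induction n using Int.induction_on with
  | zero => simp [delta_zero]
  | succ i ih =>
      have h := delta_succ α (i : ℤ)
      have hz := val_zpow_add α (i : ℤ) 1
      simp only [zpow_one] at hz
      linear_combination ih + ((α:R) - 1) * h - hz
  | pred i ih =>
      have h := delta_pred α (-(i:ℤ))
      have hz := val_zpow_add α (-(i:ℤ) - 1) 1
      simp only [zpow_one, sub_add_cancel] at hz
      linear_combination ih + ((α:R) - 1) * h + hz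

lemma delta_add (m n : ℤ) :
    delta α (m + n) = delta α m + ((α ^ m : Rˣ) : R) * delta α n := by
  induction m using Int.induction_on with
  | zero => simp [delta_zero]
  | succ i ih =>
      have h1 : ((i:ℤ) + 1 + n) = ((i:ℤ) + n) + 1 := by ring
      rw [h1, delta_succ, ih, delta_succ]
      have hz := val_zpow_add α (i:ℤ) n
      have hz1 := val_zpow_add α (i:ℤ) 1
      simp only [zpow_one] at hz1
      have hg := geom_delta α n
      linear_combination hz - delta α n * hz1 - ((α ^ (i:ℤ) : Rˣ) : R) * hg
  | pred i ih =>
      have h1 : (-(i:ℤ) - 1 + n) = (-(i:ℤ) + n) - 1 := by ring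
      rw [h1, delta_pred, ih, delta_pred]
      have hz := val_zpow_add α (-(i:ℤ) - 1) n
      have h2 : (-(i:ℤ) - 1 + n) = (-(i:ℤ) + n) - 1 := by ring
      rw [h2] at hz
      have hz1 := val_zpow_add α (-(i:ℤ) - 1) 1
      simp only [zpow_one, sub_add_cancel] at hz1
      have hg := geom_delta α n
      linear_combination delta α n * hz1 - hz + ((α ^ (-(i:ℤ) - 1) : Rˣ) : R) * hg

lemma delta_neg (n : ℤ) : delta α (-n) = -((α ^ (-n) : Rˣ) : R) * delta α n := by
  have h := delta_add α n (-n)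
  rw [add_neg_cancel, delta_zero] at h
  have hv := val_zpow_add α (-n) n
  rw [neg_add_cancel, zpow_zero, Units.val_one] at hv
  linear_combination -((α ^ (-n) : Rˣ) : R) * h + delta α (-n) * hv

lemma phi_apply (c : Multiplicative ℤ) (x : Multiplicative R) :
    Multiplicative.toAdd (((sdAction Rˣ R).comp (zpowersHom Rˣ α)) c x)
      = ((α ^ (Multiplicative.toAdd c) : Rˣ) : R) * Multiplicative.toAdd x := rfl

/-- A cocycle `p ↦ lam·x(p) + mu·δ(k(p))` whose values on two generators of `G`
lie in an ideal `I` takes all its values in `I`. -/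
lemma cocycle_vanish (lam mu : R) (I : Ideal R)
    (g g' : Multiplicative R ⋊[(sdAction Rˣ R).comp (zpowersHom Rˣ α)] Multiplicative ℤ)
    (hgen : Subgroup.closure {g, g'} = ⊤)
    (hvg : lam * Multiplicative.toAdd g.left + mu * delta α (Multiplicative.toAdd g.right) ∈ I)
    (hvg' : lam * Multiplicative.toAdd g'.left + mu * delta α (Multiplicative.toAdd g'.right) ∈ I)
    (p : Multiplicative R ⋊[(sdAction Rˣ R).comp (zpowersHom Rˣ α)] Multiplicative ℤ) :
    lam * Multiplicative.toAdd p.left + mu * delta α (Multiplicative.toAdd p.right) ∈ I := by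
  let H : Subgroup (Multiplicative R ⋊[(sdAction Rˣ R).comp (zpowersHom Rˣ α)] Multiplicative ℤ) :=
    { carrier := {q | lam * Multiplicative.toAdd q.left
        + mu * delta α (Multiplicative.toAdd q.right) ∈ I}
      one_mem' := by
        simp only [Set.mem_setOf_eq, SemidirectProduct.one_left, SemidirectProduct.one_right,
          toAdd_one, delta_zero, mul_zero, add_zero]
        exact I.zero_mem
      mul_mem' := by
        intro q1 q2 h1 h2
        simp only [Set.mem_setOf_eq, SemidirectProduct.mul_left, SemidirectProduct.mul_right,
          toAdd_mul, phi_apply] at h1 h2 ⊢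
        have e : lam * (Multiplicative.toAdd q1.left
              + ((α ^ (Multiplicative.toAdd q1.right) : Rˣ) : R) * Multiplicative.toAdd q2.left)
            + mu * delta α (Multiplicative.toAdd q1.right + Multiplicative.toAdd q2.right)
            = (lam * Multiplicative.toAdd q1.left + mu * delta α (Multiplicative.toAdd q1.right))
              + ((α ^ (Multiplicative.toAdd q1.right) : Rˣ) : R)
                * (lam * Multiplicative.toAdd q2.left
                    + mu * delta α (Multiplicative.toAdd q2.right)) := by
          rw [delta_add]; ring
        rw [e]
        exact I.add_mem h1 (I.mul_mem_left _ h2)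
      inv_mem' := by
        intro q h
        simp only [Set.mem_setOf_eq, SemidirectProduct.inv_left, SemidirectProduct.inv_right,
          toAdd_mul, toAdd_inv, phi_apply] at h ⊢
        have e : lam * (((α ^ (-(Multiplicative.toAdd q.right)) : Rˣ) : R)
              * (-(Multiplicative.toAdd q.left)))
            + mu * delta α (-(Multiplicative.toAdd q.right))
            = -((α ^ (-(Multiplicative.toAdd q.right)) : Rˣ) : R)
              * (lam * Multiplicative.toAdd q.left
                  + mu * delta α (Multiplicative.toAdd q.right)) := by
          rw [delta_neg]; ring
        rw [e]
        exact I.mul_mem_left _ h }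
  have hle : (⊤ : Subgroup _) ≤ H := by
    rw [← hgen]
    exact (Subgroup.closure_le H).mpr (by
      rintro x (rfl | rfl)
      · exact hvg
      · exact hvg')
  exact hle (Set.mem_univ p)

end DeltaLemmas

/-- In `G = R ⋊_α C` with `C` infinite cyclic (so `ν(G) = 0`) and `R` generated as
a ring by `α` and `α⁻¹`, if `(g, g')` is a generating pair of `G` then
`D_a(g,g') = r·d_a(a^{k'}) - r'·d_a(a^k)` is a unit of `R`. -/
theorem stmt_14 {R : Type*} [CommRing R] (α : Rˣ)
    (hR : Subring.closure {(α : R), ((α⁻¹ : Rˣ) : R)} = ⊤)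
    (r r' : R) (k k' : ℤ)
    (g g' : Multiplicative R ⋊[(sdAction Rˣ R).comp (zpowersHom Rˣ α)] Multiplicative ℤ)
    (hg : g = ⟨Multiplicative.ofAdd r, Multiplicative.ofAdd k⟩)
    (hg' : g' = ⟨Multiplicative.ofAdd r', Multiplicative.ofAdd k'⟩)
    (hgen : Subgroup.closure {g, g'} = ⊤) :
    IsUnit (r * delta α k' - r' * delta α k) := by
  subst hg hg'
  set D : R := r * delta α k' - r' * delta α k with hD
  set I : Ideal R := Ideal.span {D} with hI
  have hDmem : D ∈ I := Ideal.subset_span rfl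
  have hr : r ∈ I := by
    have h := cocycle_vanish α (delta α k) (-r) I _ _ hgen
      (by
        simp only [toAdd_ofAdd]
        have e : delta α k * r + -r * delta α k = 0 := by ring
        rw [e]; exact I.zero_mem)
      (by
        simp only [toAdd_ofAdd]
        have e : delta α k * r' + -r * delta α k' = -D := by rw [hD]; ring
        rw [e]; exact I.neg_mem hDmem)
      ⟨Multiplicative.ofAdd 0, Multiplicative.ofAdd 1⟩
    simp only [toAdd_ofAdd, delta_one, mul_zero, mul_one, zero_add] at h
    simpa using I.neg_mem h
  have hr' : r' ∈ I := by
    have h := cocycle_vanish α (delta α k') (-r') I _ _ hgen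
      (by
        simp only [toAdd_ofAdd]
        have e : delta α k' * r + -r' * delta α k = D := by rw [hD]; ring
        rw [e]; exact hDmem)
      (by
        simp only [toAdd_ofAdd]
        have e : delta α k' * r' + -r' * delta α k' = 0 := by ring
        rw [e]; exact I.zero_mem)
      ⟨Multiplicative.ofAdd 0, Multiplicative.ofAdd 1⟩
    simp only [toAdd_ofAdd, delta_one, mul_zero, mul_one, zero_add] at h
    simpa using I.neg_mem h
  have hone : (1 : R) ∈ I := by
    have h := cocycle_vanish α 1 0 I _ _ hgen
      (by simpa using hr)
      (by simpa using hr')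
      ⟨Multiplicative.ofAdd 1, Multiplicative.ofAdd 0⟩
    simpa [delta_zero] using h
  exact isUnit_of_dvd_one (Ideal.mem_span_singleton.mp hone)
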